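/- Let R_± = (J_±^{−1})^{21}·e^{πι s Ω}·J_± be the R-matrices obtained by twisting R_KZ = e^{ℏΩ/2} (ℏ = 2πι s) by the differential twists J_± = Υ_0^{−1}Υ_±. Then the R-matrices are quantum Stokes matrices: R_+ = e^{πι s Ω_0}·S_−^{−1} and R_− = e^{πι s Ω_0}·S_+^{−1}, where S_± are the quantum Stokes matrices of the dynamical KZ equation. -/

import Mathlib

/-!
STATEMENT 15: Let `R± = (J±⁻¹)²¹·e^{πιsΩ}·J±` be the R-matrices obtained by
twisting `R_KZ = e^{ℏΩ/2}` (`ℏ = 2πιs`) by the differential twists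
`J± = Υ₀⁻¹Υ±`.  Then `R₊ = e^{πιsΩ₀}·S₋⁻¹` and `R₋ = e^{πιsΩ₀}·S₊⁻¹`, where `S±`
are the quantum Stokes matrices of the dynamical KZ equation.

Model as in Statements 13/14: `A` the operator algebra, `τ` the flip,
`EΩ c = e^{csΩ}`, `EΩ0 c = e^{csΩ₀}` (so `R_KZ = EΩ(πι)`).  The properties of the
twists and Stokes matrices established there are taken as hypotheses:
`S₊ = J₋⁻¹·J₊` (from `Υ₊ = Υ₋·S₊ = Υ₋ J₋⁻¹ J₊`), the flip relation
`J₋ = e^{πιsΩ}J₊²¹e^{−πιsΩ₀}`, the monodromy relation, and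
`S₋ = e^{−πιsΩ₀}S₊²¹e^{πιsΩ₀}`.
-/

theorem stmt_15 (A : Type) [Ring A] [Algebra ℂ A]
    (τ : A ≃ₐ[ℂ] A) (hτinv : ∀ a, τ (τ a) = a)
    (EΩ EΩ0 : ℂ → Aˣ)
    (hEΩ : ∀ a b, EΩ (a + b) = EΩ a * EΩ b) (hEΩ0 : ∀ a b, EΩ0 (a + b) = EΩ0 a * EΩ0 b)
    (hτEΩ : ∀ c, τ (EΩ c) = EΩ c) (hτEΩ0 : ∀ c, τ (EΩ0 c) = EΩ0 c)
    (Jp Jm Sp Sm : Aˣ)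
    -- `S₊ = J₋⁻¹ J₊`
    (hS : (Sp : A) = (Jm⁻¹ : Aˣ) * (Jp : A))
    -- `J₋ = e^{πιsΩ} J₊²¹ e^{−πιsΩ₀}` (Statement 13)
    (hJrel : (Jm : A) = (EΩ (Real.pi * Complex.I) : A) * τ (Jp : A) *
      (EΩ0 (-(Real.pi * Complex.I)) : A))
    -- `S₋ = e^{−πιsΩ₀} S₊²¹ e^{πιsΩ₀}` (Statement 14 (1))
    (hSrel : (Sm : A) = (EΩ0 (-(Real.pi * Complex.I)) : A) * τ (Sp : A) *
      (EΩ0 (Real.pi * Complex.I) : A))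
    -- monodromy relation (Statement 14 (2))
    (hmon : (Jp⁻¹ : Aˣ) * (EΩ (2 * Real.pi * Complex.I) : A) * (Jp : A) =
      (Sp⁻¹ : Aˣ) * (EΩ0 (2 * Real.pi * Complex.I) : A) * ((Sm⁻¹ : Aˣ) : A))
    -- the twisted R-matrices `R± = (J±⁻¹)²¹ · e^{πιsΩ} · J±`
    (Rp Rm : A)
    (hRp : Rp = τ ((Jp⁻¹ : Aˣ) : A) * (EΩ (Real.pi * Complex.I) : A) * (Jp : A))
    (hRm : Rm = τ ((Jm⁻¹ : Aˣ) : A) * (EΩ (Real.pi * Complex.I) : A) * (Jm : A)) :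
    Rp = (EΩ0 (Real.pi * Complex.I) : A) * ((Sm⁻¹ : Aˣ) : A) ∧
    Rm = (EΩ0 (Real.pi * Complex.I) : A) * ((Sp⁻¹ : Aˣ) : A) := by

  set c : ℂ := Real.pi * Complex.I with hc
  -- τ as a monoid hom on units
  let τM : Aˣ →* Aˣ := Units.map (τ : A →* A)
  have hτMcoe : ∀ u : Aˣ, ((τM u : Aˣ) : A) = τ (u : A) := fun u => rfl
  have hτMτM : ∀ u : Aˣ, τM (τM u) = u := by
    intro u; ext; simp [hτMcoe, hτinv]
  -- basic exponential facts
  have hE0one : EΩ0 0 = 1 := by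
    have h := hEΩ0 0 0
    rw [add_zero] at h
    exact (mul_eq_left.mp h.symm)
  have hFinv : EΩ0 (-c) = (EΩ0 c)⁻¹ := by
    symm
    apply inv_eq_of_mul_eq_one_right
    rw [← hEΩ0, add_neg_cancel, hE0one]
  -- unit-level versions of hypotheses
  have hSU : Sp = Jm⁻¹ * Jp := by ext; simpa using hS
  have hJU : Jm = EΩ c * τM Jp * (EΩ0 c)⁻¹ := by
    ext; rw [← hFinv]; simpa [hτMcoe] using hJrel
  have hSrelU : Sm = (EΩ0 c)⁻¹ * τM Sp * EΩ0 c := by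
    ext; rw [← hFinv]; simpa [hτMcoe] using hSrel
  have hτME : τM (EΩ c) = EΩ c := by ext; simp [hτMcoe, hτEΩ]
  have hτMF : τM (EΩ0 c) = EΩ0 c := by ext; simp [hτMcoe, hτEΩ0]
  have hτMJm : τM Jm = EΩ c * Jp * (EΩ0 c)⁻¹ := by
    rw [hJU]; simp [map_mul, hτME, hτMτM, hτMF]
  -- key unit identities
  have key1 : (τM Jp)⁻¹ * EΩ c * Jp = EΩ0 c * Sm⁻¹ := by
    rw [hSrelU, hSU, map_mul, map_inv, hτMJm]
    group
  have key2 : (τM Jm)⁻¹ * EΩ c * Jm = EΩ0 c * Sp⁻¹ := by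
    rw [hτMJm, hSU, hJU]
    group
  constructor
  · rw [hRp]
    have := congrArg (Units.val) key1
    rw [← map_inv τM] at this; simp only [Units.val_mul, hτMcoe] at this; exact this
  · rw [hRm]
    have := congrArg (Units.val) key2
    rw [← map_inv τM] at this; simp only [Units.val_mul, hτMcoe] at this; exact this
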